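/- Lemma 2 (equality of tensors): Let A₁,A₂ and B₁,B₂ be injective MPS tensors on a ring of two sites such that for all matrices X and all matrices Y: ∑Tr(A₁^i X A₂^j)|ij⟩ = ∑Tr(B₁^i X B₂^j)|ij⟩ and ∑Tr(Y A₁^i A₂^j)|ij⟩ = ∑Tr(Y B₁^i B₂^j)|ij⟩. Then there exists a nonzero scalar λ such that A₁^i = λ B₁^i for all i and A₂^j = λ⁻¹ B₂^j for all j. -/

import Mathlib

open Matrix

private lemma mulStd' {p m n q : ℕ} (M : Matrix (Fin p) (Fin m) ℂ) (b : Fin m) (c : Fin n)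
    (N : Matrix (Fin n) (Fin q) ℂ) (a : Fin p) (d : Fin q) :
    (M * Matrix.single b c (1:ℂ) * N) a d = M a b * N c d := by
  simp [mul_apply, Matrix.single, ite_and, Finset.sum_ite_eq, Finset.sum_ite_eq']

private lemma traceStd' {m n : ℕ} (C : Matrix (Fin m) (Fin n) ℂ) (a : Fin m) (b : Fin n) :
    (C * Matrix.single b a (1:ℂ)).trace = C a b := by
  simp [trace, diag, mul_apply, Matrix.single, ite_and, Finset.sum_ite_eq, Finset.sum_ite_eq']

private lemma traceT' {m n : ℕ} (C X : Matrix (Fin m) (Fin n) ℂ) :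
    (C * Xᵀ).trace = ∑ a, ∑ b, C a b * X a b := by
  simp [trace, diag, mul_apply]

private lemma trace_cancel {n : ℕ} (M N : Matrix (Fin n) (Fin n) ℂ)
    (h : ∀ X, (M * X).trace = (N * X).trace) : M = N := by
  ext a b
  have := h (Matrix.single b a (1:ℂ))
  rwa [traceStd', traceStd'] at this

/-- A linear functional used for the "sandwich" arguments. -/
private noncomputable def sw {p m n q : ℕ} (P : Matrix (Fin p) (Fin m) ℂ)
    (Q : Matrix (Fin n) (Fin q) ℂ)
    (P' : Matrix (Fin p) (Fin m) ℂ) (Q' : Matrix (Fin n) (Fin q) ℂ) (a : Fin p) (d : Fin q) :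
    Matrix (Fin m) (Fin n) ℂ →ₗ[ℂ] ℂ where
  toFun C := (P * C * Q) a d - (P' * C * Q') a d
  map_add' C C' := by
    simp [Matrix.mul_add, Matrix.add_mul, Matrix.add_apply]; ring
  map_smul' r C := by
    simp [Matrix.mul_smul, Matrix.smul_mul, Matrix.smul_apply, smul_eq_mul]; ring

/-- Injectivity of the tensor implies: a linear functional vanishing on all blocks
vanishes everywhere. -/
private lemma inj_elim {d m n : ℕ} (M : Fin d → Matrix (Fin m) (Fin n) ℂ)
    (h : Function.Injective fun X : Matrix (Fin m) (Fin n) ℂ => fun j => (M j * Xᵀ).trace)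
    (g : Matrix (Fin m) (Fin n) ℂ →ₗ[ℂ] ℂ) (hg : ∀ j, g (M j) = 0)
    (N : Matrix (Fin m) (Fin n) ℂ) : g N = 0 := by
  set X : Matrix (Fin m) (Fin n) ℂ :=
    Matrix.of (fun a b => g (Matrix.single a b (1:ℂ))) with hXdef
  have key : ∀ C : Matrix (Fin m) (Fin n) ℂ, (C * Xᵀ).trace = g C := by
    intro C
    rw [traceT']
    conv_rhs => rw [Matrix.matrix_eq_sum_single C]
    rw [map_sum]
    refine Finset.sum_congr rfl fun a _ => ?_
    rw [map_sum]
    refine Finset.sum_congr rfl fun b _ => ?_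
    have h1 : Matrix.single a b (C a b) = (C a b) • Matrix.single a b (1:ℂ) := by simp
    rw [h1, LinearMap.map_smul]
    simp [hXdef, smul_eq_mul]
  have hX0 : X = 0 := by
    apply h
    funext j
    show (M j * Xᵀ).trace = (M j * (0 : Matrix (Fin m) (Fin n) ℂ)ᵀ).trace
    rw [key, hg j]
    simp
  have := key N
  rw [hX0] at this
  simpa using this.symm

/-- Lemma 2: two two-site injective MPS that agree under all insertions on
both bonds have proportional tensors, with reciprocal proportionality constants. -/
theorem equal_tensors_of_equal_insertions (d₁ d₂ D₁ D₂ : ℕ)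
    (A₁ B₁ : Fin d₁ → Matrix (Fin D₁) (Fin D₂) ℂ)
    (A₂ B₂ : Fin d₂ → Matrix (Fin D₂) (Fin D₁) ℂ)
    (hA₁ : Function.Injective fun X : Matrix (Fin D₁) (Fin D₂) ℂ =>
      fun i : Fin d₁ => (A₁ i * Xᵀ).trace)
    (hA₂ : Function.Injective fun X : Matrix (Fin D₂) (Fin D₁) ℂ =>
      fun j : Fin d₂ => (A₂ j * Xᵀ).trace)
    (hB₁ : Function.Injective fun X : Matrix (Fin D₁) (Fin D₂) ℂ =>
      fun i : Fin d₁ => (B₁ i * Xᵀ).trace)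
    (hB₂ : Function.Injective fun X : Matrix (Fin D₂) (Fin D₁) ℂ =>
      fun j : Fin d₂ => (B₂ j * Xᵀ).trace)
    (hX : ∀ (X : Matrix (Fin D₂) (Fin D₂) ℂ) (i : Fin d₁) (j : Fin d₂),
      (A₁ i * X * A₂ j).trace = (B₁ i * X * B₂ j).trace)
    (hY : ∀ (Y : Matrix (Fin D₁) (Fin D₁) ℂ) (i : Fin d₁) (j : Fin d₂),
      (Y * A₁ i * A₂ j).trace = (Y * B₁ i * B₂ j).trace) :
    ∃ lam : ℂ, lam ≠ 0 ∧ (∀ i, A₁ i = lam • B₁ i) ∧ (∀ j, A₂ j = lam⁻¹ • B₂ j) := by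
  -- degenerate bond dimensions
  rcases Nat.eq_zero_or_pos D₁ with hD₁ | hD₁
  · subst hD₁
    exact ⟨1, one_ne_zero, fun i => by ext a b; exact a.elim0,
      fun j => by ext a b; exact b.elim0⟩
  rcases Nat.eq_zero_or_pos D₂ with hD₂ | hD₂
  · subst hD₂
    exact ⟨1, one_ne_zero, fun i => by ext a b; exact b.elim0,
      fun j => by ext a b; exact a.elim0⟩
  -- Step 1: matrix identities from the trace identities
  have M1 : ∀ i j, A₂ j * A₁ i = B₂ j * B₁ i := by
    intro i j
    apply trace_cancel
    intro X
    calc (A₂ j * A₁ i * X).trace = ((A₁ i * X) * A₂ j).trace := by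
          rw [Matrix.mul_assoc, trace_mul_comm]
    _ = ((B₁ i * X) * B₂ j).trace := hX X i j
    _ = (B₂ j * B₁ i * X).trace := by rw [trace_mul_comm, ← Matrix.mul_assoc]
  have M2 : ∀ i j, A₁ i * A₂ j = B₁ i * B₂ j := by
    intro i j
    apply trace_cancel
    intro Y
    calc (A₁ i * A₂ j * Y).trace = (Y * A₁ i * A₂ j).trace := by
          rw [trace_mul_comm, Matrix.mul_assoc]
    _ = (Y * B₁ i * B₂ j).trace := hY Y i j
    _ = (B₁ i * B₂ j * Y).trace := by rw [trace_mul_comm (B₁ i * B₂ j), Matrix.mul_assoc]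
  -- Step 2: the key intertwining identity
  have KI : ∀ i i' j, B₁ i * B₂ j * A₁ i' = A₁ i * B₂ j * B₁ i' := by
    intro i i' j
    calc B₁ i * B₂ j * A₁ i' = A₁ i * A₂ j * A₁ i' := by rw [← M2]
    _ = A₁ i * (A₂ j * A₁ i') := by rw [Matrix.mul_assoc]
    _ = A₁ i * (B₂ j * B₁ i') := by rw [M1]
    _ = A₁ i * B₂ j * B₁ i' := by rw [Matrix.mul_assoc]
  -- Step 3: entrywise proportionality relation
  have EI : ∀ (i i' : Fin d₁) (a : Fin D₁) (b : Fin D₂) (c : Fin D₁) (dd : Fin D₂),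
      B₁ i a b * A₁ i' c dd = A₁ i a b * B₁ i' c dd := by
    intro i i' a b c dd
    have hg : ∀ j, (sw (B₁ i) (A₁ i') (A₁ i) (B₁ i') a dd) (B₂ j) = 0 := by
      intro j
      show (B₁ i * B₂ j * A₁ i') a dd - (A₁ i * B₂ j * B₁ i') a dd = 0
      rw [KI i i' j]; ring
    have h2 : (B₁ i * Matrix.single b c (1:ℂ) * A₁ i') a dd -
        (A₁ i * Matrix.single b c (1:ℂ) * B₁ i') a dd = 0 :=
      inj_elim B₂ hB₂ (sw (B₁ i) (A₁ i') (A₁ i) (B₁ i') a dd) hg (Matrix.single b c (1:ℂ))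
    rw [mulStd', mulStd'] at h2
    exact sub_eq_zero.mp h2
  -- Step 4: some A₁ entry is nonzero
  have hex : ∃ (i₀ : Fin d₁) (c : Fin D₁) (dd : Fin D₂), A₁ i₀ c dd ≠ 0 := by
    by_contra hcon
    push_neg at hcon
    have h0 : Matrix.single (⟨0, hD₁⟩ : Fin D₁) (⟨0, hD₂⟩ : Fin D₂) (1:ℂ) = 0 := by
      apply hA₁
      funext i
      show (A₁ i * (_ : Matrix (Fin D₁) (Fin D₂) ℂ)ᵀ).trace = (A₁ i * (0 : Matrix (Fin D₁) (Fin D₂) ℂ)ᵀ).trace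
      rw [traceT', traceT']
      simp [hcon]
    have := congrFun (congrFun h0 ⟨0, hD₁⟩) ⟨0, hD₂⟩
    simp at this
  obtain ⟨i₀, c, dd, hcd⟩ := hex
  set μ : ℂ := B₁ i₀ c dd / A₁ i₀ c dd with hμ
  -- B₁ = μ • A₁
  have hB1 : ∀ i, B₁ i = μ • A₁ i := by
    intro i
    ext a b
    have := EI i i₀ a b c dd
    have h3 : B₁ i a b = A₁ i a b * (B₁ i₀ c dd / A₁ i₀ c dd) := by
      field_simp
      linear_combination this
    simp [h3, hμ, smul_eq_mul, mul_comm]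
  -- μ ≠ 0
  have hμne : μ ≠ 0 := by
    intro h0
    have hBzero : ∀ i a b, B₁ i a b = 0 := by
      intro i a b
      rw [hB1 i]
      simp [h0]
    have h0' : Matrix.single (⟨0, hD₁⟩ : Fin D₁) (⟨0, hD₂⟩ : Fin D₂) (1:ℂ) = 0 := by
      apply hB₁
      funext i
      show (B₁ i * (_ : Matrix (Fin D₁) (Fin D₂) ℂ)ᵀ).trace = (B₁ i * (0 : Matrix (Fin D₁) (Fin D₂) ℂ)ᵀ).trace
      rw [traceT', traceT']
      simp [hBzero]
    have := congrFun (congrFun h0' ⟨0, hD₁⟩) ⟨0, hD₂⟩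
    simp at this
  -- A₂ = μ • B₂
  have hA2 : ∀ j, A₂ j = μ • B₂ j := by
    intro j
    have hzero : ∀ i, A₁ i * (A₂ j - μ • B₂ j) = 0 := by
      intro i
      rw [Matrix.mul_sub, M2 i j, hB1 i, Matrix.smul_mul, Matrix.mul_smul]
      simp
    ext b d'
    have hg : ∀ i, (sw (1 : Matrix (Fin D₁) (Fin D₁) ℂ) (A₂ j - μ • B₂ j) 0 0
        (⟨0, hD₁⟩ : Fin D₁) d') (A₁ i) = 0 := by
      intro i
      show ((1 : Matrix (Fin D₁) (Fin D₁) ℂ) * A₁ i * (A₂ j - μ • B₂ j)) ⟨0, hD₁⟩ d' -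
        ((0 : Matrix (Fin D₁) (Fin D₁) ℂ) * A₁ i * (0 : Matrix (Fin D₂) (Fin D₁) ℂ)) ⟨0, hD₁⟩ d' = 0
      rw [Matrix.one_mul, hzero i]
      simp
    have h2 : ((1 : Matrix (Fin D₁) (Fin D₁) ℂ) * Matrix.single (⟨0, hD₁⟩ : Fin D₁) b (1:ℂ) *
        (A₂ j - μ • B₂ j)) ⟨0, hD₁⟩ d' -
        ((0 : Matrix (Fin D₁) (Fin D₁) ℂ) * Matrix.single (⟨0, hD₁⟩ : Fin D₁) b (1:ℂ) *
        (0 : Matrix (Fin D₂) (Fin D₁) ℂ)) ⟨0, hD₁⟩ d' = 0 :=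
      inj_elim A₁ hA₁ _ hg (Matrix.single (⟨0, hD₁⟩ : Fin D₁) b (1:ℂ))
    rw [mulStd', mulStd'] at h2
    simp [Matrix.one_apply_eq] at h2
    have h4 : (A₂ j - μ • B₂ j) b d' = 0 := h2
    have := sub_eq_zero.mp (by simpa [Matrix.sub_apply] using h4)
    simpa [Matrix.smul_apply, smul_eq_mul] using this
  refine ⟨μ⁻¹, inv_ne_zero hμne, fun i => ?_, fun j => ?_⟩
  · rw [hB1 i, smul_smul, inv_mul_cancel₀ hμne, one_smul]
  · rw [hA2 j, inv_inv]
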